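/- The bilinear form α(φ⊗Uⁿ, ψ⊗Uᵐ) = n·δ_{n+m,0}·∫_X φ·(Uⁿψ) dμ is a Lie algebra 2-cocycle on Lie A(X,T): it is antisymmetric and satisfies α([x,y],z) + α([y,z],x) + α([z,x],y) = 0 for all x,y,z. -/

import Mathlib

noncomputable section
open MeasureTheory

variable {X : Type*} [TopologicalSpace X] [MeasurableSpace X]

/-- `n`-th iterate of a homeomorphism, `n : ℕ`. -/
def iterH (T : X ≃ₜ X) : ℕ → X ≃ₜ X
  | 0 => Homeomorph.refl X
  | n + 1 => (iterH T n).trans T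

/-- `n`-th power of a homeomorphism, `n : ℤ` (so `zpowH T n = Tⁿ`). -/
def zpowH (T : X ≃ₜ X) : ℤ → X ≃ₜ X
  | Int.ofNat n => iterH T n
  | Int.negSucc n => (iterH T (n + 1)).symm

/-- The operator `Uⁿ` on continuous functions: `(Uⁿψ)(x) = ψ(Tⁿ x)`. -/
def Un (T : X ≃ₜ X) (n : ℤ) (ψ : C(X, ℂ)) : C(X, ℂ) := ψ.comp (zpowH T n)

/-- The crossed product multiplication on `A(X,T) = ⊕ₙ C(X) ⊗ Uⁿ`,
`(φ⊗Uⁿ)·(ψ⊗Uᵐ) = (φ·Uⁿψ)⊗U^(n+m)`; the element `φ⊗Uⁿ` is `Finsupp.single n φ`. -/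
def amul (T : X ≃ₜ X) (a b : ℤ →₀ C(X, ℂ)) : ℤ →₀ C(X, ℂ) :=
  a.sum fun n φ => b.sum fun m ψ => Finsupp.single (n + m) (φ * Un T n ψ)
/-- The Lie bracket `[a,b] = ab - ba` on `A(X,T)`. -/
def abr (T : X ≃ₜ X) (a b : ℤ →₀ C(X, ℂ)) : ℤ →₀ C(X, ℂ) := amul T a b - amul T b a
/-- The 2-cocycle `α(φ⊗Uⁿ, ψ⊗Uᵐ) = n·δ_{n+m,0}·∫ φ·Uⁿψ dμ`, extended bilinearly. -/
def acoc (T : X ≃ₜ X) (μ : Measure X) (a b : ℤ →₀ C(X, ℂ)) : ℂ :=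
  a.sum fun n φ => b.sum fun m ψ =>
    if n + m = 0 then (n : ℂ) * ∫ x, (φ * Un T n ψ) x ∂μ else 0

set_option linter.unusedSectionVars false

/-! ### Auxiliary lemmas -/

lemma iterH_toEquiv (T : X ≃ₜ X) (n : ℕ) : (iterH T n).toEquiv = T.toEquiv ^ n := by
  induction n with
  | zero => rfl
  | succ n ih =>
    ext x
    rw [pow_succ']
    show T ((iterH T n) x) = T ((T.toEquiv ^ n) x)
    rw [show (iterH T n) x = (iterH T n).toEquiv x from rfl, ih]

lemma zpowH_toEquiv (T : X ≃ₜ X) (n : ℤ) : (zpowH T n).toEquiv = T.toEquiv ^ n := by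
  cases n with
  | ofNat n => simpa [zpowH] using iterH_toEquiv T n
  | negSucc n =>
    show ((iterH T (n+1)).symm).toEquiv = _
    rw [zpow_negSucc]
    ext x
    show (iterH T (n+1)).toEquiv.symm x = ((T.toEquiv ^ (n+1))⁻¹ : Equiv.Perm X) x
    rw [iterH_toEquiv]
    rfl

lemma zpowH_zpowH (T : X ≃ₜ X) (i j : ℤ) (x : X) :
    zpowH T j (zpowH T i x) = zpowH T (i + j) x := by
  have h1 : ∀ k : ℤ, (zpowH T k : X → X) = ⇑(T.toEquiv ^ k) := by
    intro k
    rw [show (zpowH T k : X → X) = ⇑(zpowH T k).toEquiv from rfl, zpowH_toEquiv]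
  simp only [h1]
  rw [add_comm, zpow_add]
  rfl

lemma Un_mul (T : X ≃ₜ X) (j : ℤ) (f g : C(X, ℂ)) :
    Un T j (f * g) = Un T j f * Un T j g := rfl

lemma Un_Un (T : X ≃ₜ X) (i j : ℤ) (f : C(X, ℂ)) :
    Un T j (Un T i f) = Un T (j + i) f := by
  ext x
  exact congrArg f (zpowH_zpowH T j i x)

lemma Un_zero (T : X ≃ₜ X) (f : C(X, ℂ)) : Un T 0 f = f := rfl

lemma Un_negone_Tapply (T : X ≃ₜ X) (f : C(X, ℂ)) (x : X) : Un T (-1) f (T x) = f x := by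
  show f ((zpowH T (-1)) (T x)) = f x
  exact congrArg f (T.symm_apply_apply x)

variable {μ : Measure X}

lemma integral_Un [CompactSpace X] [BorelSpace X] [IsProbabilityMeasure μ]
    (T : X ≃ₜ X) (hinv : ∀ f : C(X, ℂ), ∫ x, f (T x) ∂μ = ∫ x, f x ∂μ)
    (j : ℤ) (f : C(X, ℂ)) : ∫ x, (Un T j f) x ∂μ = ∫ x, f x ∂μ := by
  have h1 : ∀ g : C(X, ℂ), ∫ x, (Un T 1 g) x ∂μ = ∫ x, g x ∂μ := fun g => hinv g
  have hm1 : ∀ g : C(X, ℂ), ∫ x, (Un T (-1) g) x ∂μ = ∫ x, g x ∂μ := by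
    intro g
    have := hinv (Un T (-1) g)
    rw [show (∫ x, (Un T (-1) g) (T x) ∂μ) = ∫ x, g x ∂μ from by
      congr 1; ext x; exact Un_negone_Tapply T g x] at this
    exact this.symm
  induction j using Int.induction_on with
  | zero => rw [Un_zero]
  | succ n ih =>
    rw [show ((n : ℤ) + 1) = 1 + n by ring, ← Un_Un, h1, ih]
  | pred n ih =>
    rw [show (-(n : ℤ) - 1) = -1 + -n by ring, ← Un_Un, hm1, ih]

lemma cm_integrable [CompactSpace X] [BorelSpace X] [IsProbabilityMeasure μ] (f : C(X, ℂ)) :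
    Integrable (⇑f) μ :=
  f.continuous.integrable_of_hasCompactSupport (isClosed_tsupport _).isCompact

section coclemmas
variable [CompactSpace X] [BorelSpace X] [IsProbabilityMeasure μ] (T : X ≃ₜ X)

lemma inner_zero (n : ℤ) (c : ℤ →₀ C(X, ℂ)) :
    (c.sum fun m ψ => if n + m = 0 then (n : ℂ) * ∫ x, ((0 : C(X,ℂ)) * Un T n ψ) x ∂μ else 0) = 0 := by
  calc (c.sum fun m ψ => if n + m = 0 then (n : ℂ) * ∫ x, ((0 : C(X,ℂ)) * Un T n ψ) x ∂μ else 0)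
      = c.sum (fun _ _ => (0 : ℂ)) := Finsupp.sum_congr (fun m _ => by simp)
    _ = 0 := Finset.sum_const_zero

lemma acoc_single_left (n : ℤ) (φ : C(X, ℂ)) (c : ℤ →₀ C(X, ℂ)) :
    acoc T μ (Finsupp.single n φ) c =
      c.sum fun m ψ => if n + m = 0 then (n : ℂ) * ∫ x, (φ * Un T n ψ) x ∂μ else 0 := by
  unfold acoc
  exact Finsupp.sum_single_index (inner_zero (μ := μ) T n c)

lemma acoc_add_left (a a' c : ℤ →₀ C(X, ℂ)) :
    acoc T μ (a + a') c = acoc T μ a c + acoc T μ a' c := by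
  unfold acoc
  apply Finsupp.sum_add_index'
  · intro n; exact inner_zero T n c
  · intro n φ φ'
    rw [← Finsupp.sum_add]
    apply Finsupp.sum_congr
    intro m _
    by_cases h : n + m = 0
    · simp only [h, if_true]
      rw [← mul_add, ← integral_add]
      · congr 1; apply integral_congr_ae; filter_upwards with x; simp; ring
      · exact cm_integrable _
      · exact cm_integrable _
    · simp [h]

lemma acoc_sub_left (a a' c : ℤ →₀ C(X, ℂ)) :
    acoc T μ (a - a') c = acoc T μ a c - acoc T μ a' c := by
  unfold acoc
  apply Finsupp.sum_sub_index
  intro n φ φ'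
  rw [← Finsupp.sum_sub]
  apply Finsupp.sum_congr
  intro m _
  by_cases h : n + m = 0
  · simp only [h, if_true]
    rw [← mul_sub, ← integral_sub (cm_integrable _) (cm_integrable _)]
    congr 1; apply integral_congr_ae; filter_upwards with x; simp; ring
  · simp [h]

/-- `acoc` in the first argument, as an `AddMonoidHom`. -/
def acocHom (c : ℤ →₀ C(X, ℂ)) : (ℤ →₀ C(X, ℂ)) →+ ℂ :=
  AddMonoidHom.mk' (fun a => acoc T μ a c) (fun a a' => acoc_add_left T a a' c)

/-- The elementary term of the cocycle applied to a product of generators. -/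
def Pterm (T : X ≃ₜ X) (μ : Measure X) (n : ℤ) (φ : C(X, ℂ)) (m : ℤ) (ψ : C(X, ℂ))
    (k : ℤ) (χ : C(X, ℂ)) : ℂ :=
  if n + m + k = 0 then ((n : ℂ) + m) * ∫ x, ((φ * Un T n ψ) * Un T (n + m) χ) x ∂μ else 0

lemma acoc_amul (a b c : ℤ →₀ C(X, ℂ)) :
    acoc T μ (amul T a b) c =
      a.sum fun n φ => b.sum fun m ψ => c.sum fun k χ => Pterm T μ n φ m ψ k χ := by
  unfold amul
  rw [show acoc T μ (a.sum fun n φ => b.sum fun m ψ => Finsupp.single (n + m) (φ * Un T n ψ)) c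
      = acocHom (μ := μ) T c (a.sum fun n φ => b.sum fun m ψ => Finsupp.single (n + m) (φ * Un T n ψ)) from rfl,
    map_finsuppSum]
  apply Finsupp.sum_congr
  intro n _
  rw [map_finsuppSum]
  apply Finsupp.sum_congr
  intro m _
  rw [show acocHom (μ := μ) T c (Finsupp.single (n + m) (_ * Un T n _)) =
      acoc T μ (Finsupp.single (n + m) (_ * Un T n _)) c from rfl,
    acoc_single_left]
  apply Finsupp.sum_congr
  intro k _
  unfold Pterm
  push_cast
  rfl

lemma pt_antisymm (hinv : ∀ f : C(X, ℂ), ∫ x, f (T x) ∂μ = ∫ x, f x ∂μ) (n m : ℤ) (φ ψ : C(X, ℂ)) :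
    (if n + m = 0 then (n : ℂ) * ∫ x, (φ * Un T n ψ) x ∂μ else 0)
      + (if m + n = 0 then (m : ℂ) * ∫ x, (ψ * Un T m φ) x ∂μ else 0) = 0 := by
  by_cases h : n + m = 0
  · rw [if_pos h, if_pos (by omega)]
    have e : ∫ x, (ψ * Un T m φ) x ∂μ = ∫ x, (φ * Un T n ψ) x ∂μ := by
      rw [← integral_Un T hinv n ((ψ * Un T m φ))]
      congr 1
      rw [show ⇑(Un T n (ψ * Un T m φ)) = ⇑(Un T n ψ * Un T (n + m) φ) from by
        rw [Un_mul, Un_Un]]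
      rw [show n + m = (0 : ℤ) from h, Un_zero]
      ext x
      show (Un T n ψ * φ) x = (φ * Un T n ψ) x
      rw [mul_comm]
    rw [e]
    have hc : (n : ℂ) + (m : ℂ) = 0 := by exact_mod_cast congrArg (Int.cast : ℤ → ℂ) h
    set I := ∫ x, (φ * Un T n ψ) x ∂μ
    linear_combination I * hc
  · rw [if_neg h, if_neg (by omega)]
    simp

lemma pt_six (hinv : ∀ f : C(X, ℂ), ∫ x, f (T x) ∂μ = ∫ x, f x ∂μ)
    (n m k : ℤ) (φ ψ χ : C(X, ℂ)) :
    Pterm T μ n φ m ψ k χ - Pterm T μ m ψ n φ k χ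
      + (Pterm T μ m ψ k χ n φ - Pterm T μ k χ m ψ n φ)
      + (Pterm T μ k χ n φ m ψ - Pterm T μ n φ k χ m ψ) = 0 := by
  unfold Pterm
  by_cases h : n + m + k = 0
  · rw [if_pos (by omega), if_pos (by omega), if_pos (by omega), if_pos (by omega),
      if_pos (by omega), if_pos (by omega)]
    have shift : ∀ (j : ℤ) (f : C(X, ℂ)), ∫ x, f x ∂μ = ∫ x, (Un T j f) x ∂μ :=
      fun j f => (integral_Un T hinv j f).symm
    have E1 : ∫ x, ((ψ * Un T m φ) * Un T (m + n) χ) x ∂μ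
        = ∫ x, ((φ * Un T n χ) * Un T (n + k) ψ) x ∂μ := by
      have e : Un T (-m) ((ψ * Un T m φ) * Un T (m + n) χ)
          = (φ * Un T n χ) * Un T (n + k) ψ := by
        rw [Un_mul, Un_mul, Un_Un, Un_Un, show (-m) + m = (0:ℤ) by ring, Un_zero,
          show (-m) + (m + n) = n by ring, show n + k = -m by omega]
        ring
      rw [shift (-m), e]
    have E2 : ∫ x, ((ψ * Un T m χ) * Un T (m + k) φ) x ∂μ
        = ∫ x, ((φ * Un T n ψ) * Un T (n + m) χ) x ∂μ := by
      have e : Un T n ((ψ * Un T m χ) * Un T (m + k) φ)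
          = (φ * Un T n ψ) * Un T (n + m) χ := by
        rw [Un_mul, Un_mul, Un_Un, Un_Un, show n + (m + k) = (0:ℤ) by omega, Un_zero]
        ring
      rw [shift n, e]
    have E3 : ∫ x, ((χ * Un T k ψ) * Un T (k + m) φ) x ∂μ
        = ∫ x, ((φ * Un T n χ) * Un T (n + k) ψ) x ∂μ := by
      have e : Un T n ((χ * Un T k ψ) * Un T (k + m) φ)
          = (φ * Un T n χ) * Un T (n + k) ψ := by
        rw [Un_mul, Un_mul, Un_Un, Un_Un, show n + (k + m) = (0:ℤ) by omega, Un_zero]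
        ring
      rw [shift n, e]
    have E4 : ∫ x, ((χ * Un T k φ) * Un T (k + n) ψ) x ∂μ
        = ∫ x, ((φ * Un T n ψ) * Un T (n + m) χ) x ∂μ := by
      have e : Un T (n + m) ((χ * Un T k φ) * Un T (k + n) ψ)
          = (φ * Un T n ψ) * Un T (n + m) χ := by
        rw [Un_mul, Un_mul, Un_Un, Un_Un, show (n + m) + k = (0:ℤ) by omega, Un_zero,
          show (n + m) + (k + n) = n by omega]
        ring
      rw [shift (n + m), e]
    rw [E1, E2, E3, E4]
    have hc : (n : ℂ) + (m : ℂ) + (k : ℂ) = 0 := by exact_mod_cast congrArg (Int.cast : ℤ → ℂ) h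
    set I1 := ∫ x, ((φ * Un T n ψ) * Un T (n + m) χ) x ∂μ
    set I2 := ∫ x, ((φ * Un T n χ) * Un T (n + k) ψ) x ∂μ
    linear_combination (2 * I1 - 2 * I2) * hc
  · rw [if_neg (by omega), if_neg (by omega), if_neg (by omega), if_neg (by omega),
      if_neg (by omega), if_neg (by omega)]
    ring

lemma acoc_abr (hinv : ∀ f : C(X, ℂ), ∫ x, f (T x) ∂μ = ∫ x, f x ∂μ) (a b c : ℤ →₀ C(X, ℂ)) :
    acoc T μ (abr T a b) c =
      a.sum fun n φ => b.sum fun m ψ => c.sum fun k χ =>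
        (Pterm T μ n φ m ψ k χ - Pterm T μ m ψ n φ k χ) := by
  unfold abr
  rw [acoc_sub_left, acoc_amul, acoc_amul]
  rw [Finsupp.sum_comm b a (fun m ψ n φ => c.sum fun k χ => Pterm T μ m ψ n φ k χ)]
  rw [← Finsupp.sum_sub]
  apply Finsupp.sum_congr
  intro n _
  rw [← Finsupp.sum_sub]
  apply Finsupp.sum_congr
  intro m _
  rw [← Finsupp.sum_sub]

/-- Rotation of a triple `Finsupp` sum. -/
lemma triple_rot (d e f' : ℤ →₀ C(X, ℂ)) (F : ℤ → C(X, ℂ) → ℤ → C(X, ℂ) → ℤ → C(X, ℂ) → ℂ) :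
    (d.sum fun n φ => e.sum fun m ψ => f'.sum fun k χ => F n φ m ψ k χ)
      = f'.sum fun k χ => d.sum fun n φ => e.sum fun m ψ => F n φ m ψ k χ := by
  calc (d.sum fun n φ => e.sum fun m ψ => f'.sum fun k χ => F n φ m ψ k χ)
      = d.sum fun n φ => f'.sum fun k χ => e.sum fun m ψ => F n φ m ψ k χ :=
        Finsupp.sum_congr (fun n _ => Finsupp.sum_comm e f' _)
    _ = f'.sum fun k χ => d.sum fun n φ => e.sum fun m ψ => F n φ m ψ k χ :=
        Finsupp.sum_comm d f' _

lemma sum3_comb (d : ℤ →₀ C(X, ℂ)) (F G H : ℤ → C(X, ℂ) → ℂ) :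
    d.sum F + d.sum G + d.sum H = d.sum (fun n φ => F n φ + G n φ + H n φ) := by
  simp [Finsupp.sum, Finset.sum_add_distrib]

end coclemmas

/-- `α` is an antisymmetric 2-cocycle on `Lie A(X,T)`. -/
theorem acoc_is_two_cocycle [CompactSpace X] [T2Space X] [BorelSpace X] (T : X ≃ₜ X)
    (μ : Measure X) [IsProbabilityMeasure μ]
    (hinv : ∀ f : C(X, ℂ), ∫ x, f (T x) ∂μ = ∫ x, f x ∂μ) :
    (∀ a b : ℤ →₀ C(X, ℂ), acoc T μ a b = -acoc T μ b a) ∧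
    (∀ a b c : ℤ →₀ C(X, ℂ),
      acoc T μ (abr T a b) c + acoc T μ (abr T b c) a + acoc T μ (abr T c a) b = 0) := by
  constructor
  · intro a b
    have key : acoc T μ a b + acoc T μ b a = 0 := by
      unfold acoc
      rw [Finsupp.sum_comm b a (fun m ψ n φ =>
        if m + n = 0 then (m : ℂ) * ∫ x, (ψ * Un T m φ) x ∂μ else 0)]
      rw [← Finsupp.sum_add]
      calc (a.sum fun n φ =>
              (b.sum fun m ψ => if n + m = 0 then (n : ℂ) * ∫ x, (φ * Un T n ψ) x ∂μ else 0)
              + b.sum fun m ψ => if m + n = 0 then (m : ℂ) * ∫ x, (ψ * Un T m φ) x ∂μ else 0)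
          = a.sum (fun _ _ => (0 : ℂ)) := by
            apply Finsupp.sum_congr
            intro n _
            rw [← Finsupp.sum_add]
            calc (b.sum fun m ψ =>
                    (if n + m = 0 then (n : ℂ) * ∫ x, ((a n) * Un T n ψ) x ∂μ else 0)
                    + (if m + n = 0 then (m : ℂ) * ∫ x, (ψ * Un T m (a n)) x ∂μ else 0))
                = b.sum (fun _ _ => (0 : ℂ)) :=
                  Finsupp.sum_congr (fun m _ => pt_antisymm T hinv n m (a n) (b m))
              _ = 0 := Finset.sum_const_zero
        _ = 0 := Finset.sum_const_zero
    exact eq_neg_of_add_eq_zero_left key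
  · intro a b c
    rw [acoc_abr T hinv a b c, acoc_abr T hinv b c a, acoc_abr T hinv c a b]
    rw [triple_rot b c a, triple_rot c a b, triple_rot b c a]
    rw [sum3_comb]
    calc (a.sum fun n φ =>
            ((b.sum fun m ψ => c.sum fun k χ =>
                (Pterm T μ n φ m ψ k χ - Pterm T μ m ψ n φ k χ))
              + (b.sum fun m ψ => c.sum fun k χ =>
                (Pterm T μ m ψ k χ n φ - Pterm T μ k χ m ψ n φ))
              + (b.sum fun m ψ => c.sum fun k χ =>
                (Pterm T μ k χ n φ m ψ - Pterm T μ n φ k χ m ψ))))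
        = a.sum (fun _ _ => (0 : ℂ)) := by
          apply Finsupp.sum_congr
          intro n _
          rw [sum3_comb]
          calc _ = b.sum (fun _ _ => (0 : ℂ)) := by
                apply Finsupp.sum_congr
                intro m _
                rw [sum3_comb]
                calc _ = c.sum (fun _ _ => (0 : ℂ)) := by
                      apply Finsupp.sum_congr
                      intro k _
                      exact pt_six T hinv n m k (a n) (b m) (c k)
                  _ = 0 := Finset.sum_const_zero
            _ = 0 := Finset.sum_const_zero
      _ = 0 := Finset.sum_const_zero
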